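/- Disjoint tree partitioning: Given a DFS tree T of an undirected graph G on n vertices rooted at a dummy root r connected to all vertices, and a set U of k failed vertices and failed tree edges, there exists a partition of the vertex set V \ ({r} ∪ V_f) into a collection P of ancestor-descendant paths of T and a collection 𝒯 of subtrees of T such that: (i) no path in P and no tree in 𝒯 contains a failed vertex or failed edge, (ii) |P| ≤ k, and (iii) no edge of G joins two distinct trees of 𝒯. -/

import Mathlib

/-- `u` is an ancestor of `v` with respect to the parent function `par`
(every vertex is an ancestor of itself). -/
def IsAncestor {V : Type*} (par : V → V) (u v : V) : Prop := ∃ n : ℕ, par^[n] v = u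

/-- A spanning tree of `G` rooted at `r`, given by a parent function:
the root is its own parent, every vertex reaches the root by iterating
the parent function, and each non-root vertex is adjacent to its parent. -/
structure RootedSpanningTree {V : Type*} (G : SimpleGraph V) (r : V) where
  par : V → V
  par_root : par r = r
  reaches_root : ∀ v, ∃ n : ℕ, par^[n] v = r
  adj_par : ∀ v, v ≠ r → G.Adj (par v) v

/-- Every edge of `G` joins two vertices in ancestor-descendant relation
in the tree, i.e. there are no cross edges (all non-tree edges are back edges). -/
def RootedSpanningTree.noCrossEdges {V : Type*} {G : SimpleGraph V} {r : V}
    (T : RootedSpanningTree G r) : Prop :=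
  ∀ u v, G.Adj u v → IsAncestor T.par u v ∨ IsAncestor T.par v u

/-- `v` lies on the ancestor-descendant tree path from `x` down to `y`
(where `x` is an ancestor of `y`). -/
def OnTreePath {V : Type*} (par : V → V) (x y v : V) : Prop :=
  IsAncestor par x v ∧ IsAncestor par v y


namespace DTPaux
set_option linter.unusedSectionVars false

variable {V : Type*} [Fintype V] [DecidableEq V]

theorem anc_refl (par : V → V) (v : V) : IsAncestor par v v := ⟨0, rfl⟩

theorem anc_trans {par : V → V} {u v w : V} (h1 : IsAncestor par u v)
    (h2 : IsAncestor par v w) : IsAncestor par u w := by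
  obtain ⟨n, hn⟩ := h1; obtain ⟨m, hm⟩ := h2
  exact ⟨n + m, by rw [Function.iterate_add_apply, hm, hn]⟩

theorem anc_total {par : V → V} {u u' v : V} (h1 : IsAncestor par u v)
    (h2 : IsAncestor par u' v) : IsAncestor par u u' ∨ IsAncestor par u' u := by
  obtain ⟨n, hn⟩ := h1; obtain ⟨m, hm⟩ := h2
  rcases le_total n m with h | h
  · right
    exact ⟨m - n, by rw [← hn, ← Function.iterate_add_apply, Nat.sub_add_cancel h, hm]⟩
  · left
    exact ⟨n - m, by rw [← hm, ← Function.iterate_add_apply, Nat.sub_add_cancel h, hn]⟩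

theorem iter_root {par : V → V} {r : V} (hroot : par r = r) (n : ℕ) : par^[n] r = r :=
  Function.iterate_fixed hroot n

theorem reach_mono {par : V → V} {r : V} (hroot : par r = r) {v : V} {m N : ℕ}
    (h : par^[m] v = r) (hmN : m ≤ N) : par^[N] v = r := by
  rw [← Nat.sub_add_cancel hmN, Function.iterate_add_apply, h, iter_root hroot]

noncomputable def dep (par : V → V) (r : V) (hre : ∀ v, ∃ n, par^[n] v = r) (v : V) : ℕ :=
  Nat.find (hre v)

theorem dep_spec (par : V → V) (r : V) (hre : ∀ v, ∃ n, par^[n] v = r) (v : V) :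
    par^[dep par r hre v] v = r := Nat.find_spec (hre v)

theorem dep_le {par : V → V} {r : V} (hre : ∀ v, ∃ n, par^[n] v = r) {v : V} {n : ℕ}
    (h : par^[n] v = r) : dep par r hre v ≤ n := Nat.find_le h

theorem witness_eq {par : V → V} {r : V} (hroot : par r = r) (hre : ∀ v, ∃ n, par^[n] v = r)
    {u v : V} {n : ℕ} (hu : u ≠ r) (h : par^[n] v = u) :
    n + dep par r hre u = dep par r hre v := by
  have h1 : dep par r hre v ≤ dep par r hre u + n := by
    refine dep_le hre ?_
    rw [Function.iterate_add_apply, h, dep_spec]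
  have h2 : n < dep par r hre v := by
    by_contra hc
    push_neg at hc
    exact hu (by rw [← h]; exact reach_mono hroot (dep_spec par r hre v) hc)
  have h3 : dep par r hre u ≤ dep par r hre v - n := by
    refine dep_le hre ?_
    rw [← h, ← Function.iterate_add_apply, Nat.sub_add_cancel h2.le, dep_spec]
  omega

theorem anc_eq_of_dep {par : V → V} {r : V} (hroot : par r = r) (hre : ∀ v, ∃ n, par^[n] v = r)
    {u v : V} (hu : u ≠ r) (h : IsAncestor par u v)
    (hd : dep par r hre v ≤ dep par r hre u) : u = v := by
  obtain ⟨n, hn⟩ := h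
  have := witness_eq hroot hre hu hn
  have hn0 : n = 0 := by omega
  rw [hn0] at hn; exact hn.symm

theorem dep_par_lt {par : V → V} {r : V} (hroot : par r = r) (hre : ∀ v, ∃ n, par^[n] v = r)
    {v : V} (hv : v ≠ r) : dep par r hre (par v) < dep par r hre v := by
  have h0 : dep par r hre v ≠ 0 := by
    intro h
    exact hv (by have := dep_spec par r hre v; rwa [h] at this)
  have h1 : par^[dep par r hre v - 1] (par v) = r := by
    rw [← Function.iterate_succ_apply]
    have : dep par r hre v - 1 + 1 = dep par r hre v := by omega
    rw [Nat.succ_eq_add_one, this]; exact dep_spec par r hre v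
  have := dep_le hre h1
  omega


def Clean (par : V → V) (r : V) (Vf Ef : Finset V) (u v : V) : Prop :=
  ∃ n, par^[n] v = u ∧ (∀ i ≤ n, par^[i] v ∉ Vf ∧ par^[i] v ≠ r) ∧ ∀ i < n, par^[i] v ∉ Ef

theorem clean_props {par : V → V} {r : V} {Vf Ef : Finset V} {u v : V}
    (h : Clean par r Vf Ef u v) :
    IsAncestor par u v ∧ (v ∉ Vf ∧ v ≠ r) ∧ (u ∉ Vf ∧ u ≠ r) ∧ (u ≠ v → v ∉ Ef) := by
  obtain ⟨n, h1, h2, h3⟩ := h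
  refine ⟨⟨n, h1⟩, h2 0 (Nat.zero_le n), by rw [← h1]; exact h2 n le_rfl, ?_⟩
  intro hne
  have hn : n ≠ 0 := by rintro rfl; exact hne h1.symm
  exact h3 0 (Nat.pos_of_ne_zero hn)

theorem clean_refl {par : V → V} {r : V} {Vf Ef : Finset V} {v : V}
    (h1 : v ∉ Vf) (h2 : v ≠ r) : Clean par r Vf Ef v v := by
  refine ⟨0, rfl, ?_, ?_⟩
  · intro i hi
    have : i = 0 := Nat.le_zero.mp hi
    subst this; exact ⟨h1, h2⟩
  · intro i hi; exact absurd hi (Nat.not_lt_zero i)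

theorem clean_trans {par : V → V} {r : V} {Vf Ef : Finset V} {u v w : V}
    (huv : Clean par r Vf Ef u v) (hvw : Clean par r Vf Ef v w) : Clean par r Vf Ef u w := by
  obtain ⟨n, hn, hv, he⟩ := huv
  obtain ⟨m, hm, hv', he'⟩ := hvw
  refine ⟨n + m, ?_, ?_, ?_⟩
  · rw [Function.iterate_add_apply, hm, hn]
  · intro i hi
    rcases le_or_gt i m with h | h
    · exact hv' i h
    · have heq : par^[i] w = par^[i - m] v := by
        rw [← hm, ← Function.iterate_add_apply, Nat.sub_add_cancel h.le]
      rw [heq]; exact hv (i - m) (by omega)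
  · intro i hi
    rcases lt_or_ge i m with h | h
    · exact he' i h
    · have heq : par^[i] w = par^[i - m] v := by
        rw [← hm, ← Function.iterate_add_apply, Nat.sub_add_cancel h]
      rw [heq]; exact he (i - m) (by omega)

/-- splitting a clean path at an intermediate vertex -/
theorem clean_mid {par : V → V} {r : V} {Vf Ef : Finset V}
    (hroot : par r = r) (hre : ∀ v, ∃ n, par^[n] v = r) {u v w : V}
    (h : Clean par r Vf Ef u w) (h1 : IsAncestor par u v) (h2 : IsAncestor par v w) :
    Clean par r Vf Ef u v ∧ Clean par r Vf Ef v w := by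
  obtain ⟨n, hn, hv, he⟩ := h
  have hu_ne : u ≠ r := by rw [← hn]; exact (hv n le_rfl).2
  have hv_ne : v ≠ r := by
    rintro rfl
    obtain ⟨k, hk⟩ := h1
    exact hu_ne (by rw [← hk, iter_root hroot])
  obtain ⟨j, hj⟩ := h2
  have hjd := witness_eq hroot hre hv_ne hj
  have hnd := witness_eq hroot hre hu_ne hn
  obtain ⟨k, hk⟩ := h1
  have hkd := witness_eq hroot hre hu_ne hk
  have hjn : j ≤ n := by omega
  constructor
  · refine ⟨n - j, ?_, ?_, ?_⟩
    · rw [← hj, ← Function.iterate_add_apply, Nat.sub_add_cancel hjn, hn]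
    · intro i hi
      have heq : par^[i] v = par^[i + j] w := by
        rw [← hj, ← Function.iterate_add_apply]
      rw [heq]; exact hv (i + j) (by omega)
    · intro i hi
      have heq : par^[i] v = par^[i + j] w := by
        rw [← hj, ← Function.iterate_add_apply]
      rw [heq]; exact he (i + j) (by omega)
  · exact ⟨j, hj, fun i hi => hv i (le_trans hi hjn), fun i hi => he i (lt_of_lt_of_le hi hjn)⟩


section Main

variable (par : V → V) (r : V) (Vf Ef : Finset V)

/-- attachment points: parents of failures -/
def DD : Finset V := (Vf ∪ Ef).image par

open Classical in
/-- candidates for `v`: attachment points cleanly below `v` -/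
noncomputable def Cand (v : V) : Finset V :=
  (DD par Vf Ef).filter (fun d => Clean par r Vf Ef v d)

open Classical in
theorem mem_Cand {v d : V} : d ∈ Cand par r Vf Ef v ↔ d ∈ DD par Vf Ef ∧ Clean par r Vf Ef v d := by
  simp [Cand]

noncomputable def sig (v : V) : V :=
  if h : (Cand par r Vf Ef v).Nonempty then
    (Fintype.equivFin V).symm
      (((Cand par r Vf Ef v).image (Fintype.equivFin V)).min' (h.image _))
  else v

theorem sig_mem {v : V} (h : (Cand par r Vf Ef v).Nonempty) :
    sig par r Vf Ef v ∈ Cand par r Vf Ef v := by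
  rw [sig, dif_pos h]
  have hm := Finset.min'_mem ((Cand par r Vf Ef v).image (Fintype.equivFin V)) (h.image _)
  rw [Finset.mem_image] at hm
  obtain ⟨a, ha, hae⟩ := hm
  rw [← hae, Equiv.symm_apply_apply]
  exact ha

theorem sig_min {v d : V} (h : (Cand par r Vf Ef v).Nonempty) (hd : d ∈ Cand par r Vf Ef v) :
    (Fintype.equivFin V) (sig par r Vf Ef v) ≤ (Fintype.equivFin V) d := by
  rw [sig, dif_pos h, Equiv.apply_symm_apply]
  exact Finset.min'_le _ _ (Finset.mem_image_of_mem _ hd)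

theorem sig_contig {x v d : V} (hroot : par r = r)
    (hx : (Cand par r Vf Ef x).Nonempty) (hsx : sig par r Vf Ef x = d)
    (hxv : Clean par r Vf Ef x v) (hd : d ∈ Cand par r Vf Ef v) :
    sig par r Vf Ef v = d := by
  have hv : (Cand par r Vf Ef v).Nonempty := ⟨d, hd⟩
  have hsub : Cand par r Vf Ef v ⊆ Cand par r Vf Ef x := by
    intro d' hd'
    rw [mem_Cand] at hd' ⊢
    exact ⟨hd'.1, clean_trans hxv hd'.2⟩
  have h1 := sig_min par r Vf Ef hx (hsub (sig_mem par r Vf Ef hv))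
  rw [hsx] at h1
  have h2 := sig_min par r Vf Ef hv hd
  exact (Fintype.equivFin V).injective (le_antisymm h2 h1)

open Classical in
noncomputable def fiberF (d : V) : Finset V :=
  Finset.univ.filter (fun v => (Cand par r Vf Ef v).Nonempty ∧ sig par r Vf Ef v = d)

open Classical in
theorem mem_fiberF {v d : V} :
    v ∈ fiberF par r Vf Ef d ↔ (Cand par r Vf Ef v).Nonempty ∧ sig par r Vf Ef v = d := by
  simp [fiberF]

theorem fiber_clean {v d : V} (h : v ∈ fiberF par r Vf Ef d) :
    Clean par r Vf Ef v d ∧ d ∈ DD par Vf Ef := by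
  rw [mem_fiberF] at h
  have := sig_mem par r Vf Ef h.1
  rw [h.2, mem_Cand] at this
  exact ⟨this.2, this.1⟩

variable (hre : ∀ v, ∃ n, par^[n] v = r)

noncomputable def topF (d : V) : V :=
  if h : (fiberF par r Vf Ef d).Nonempty then
    Classical.choose (Finset.exists_min_image _ (dep par r hre) h)
  else d

noncomputable def botF (d : V) : V :=
  if h : (fiberF par r Vf Ef d).Nonempty then
    Classical.choose (Finset.exists_max_image _ (dep par r hre) h)
  else d

theorem topF_spec {d : V} (h : (fiberF par r Vf Ef d).Nonempty) :
    topF par r Vf Ef hre d ∈ fiberF par r Vf Ef d ∧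
      ∀ v ∈ fiberF par r Vf Ef d,
        dep par r hre (topF par r Vf Ef hre d) ≤ dep par r hre v := by
  rw [topF, dif_pos h]
  obtain ⟨h1, h2⟩ := Classical.choose_spec (Finset.exists_min_image _ (dep par r hre) h)
  exact ⟨h1, h2⟩

theorem botF_spec {d : V} (h : (fiberF par r Vf Ef d).Nonempty) :
    botF par r Vf Ef hre d ∈ fiberF par r Vf Ef d ∧
      ∀ v ∈ fiberF par r Vf Ef d,
        dep par r hre v ≤ dep par r hre (botF par r Vf Ef hre d) := by
  rw [botF, dif_pos h]
  obtain ⟨h1, h2⟩ := Classical.choose_spec (Finset.exists_max_image _ (dep par r hre) h)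
  exact ⟨h1, h2⟩

variable (hroot : par r = r)
include hre hroot

/-- two members of a fiber, one of smaller depth, are in ancestor relation -/
theorem fiber_anc {d u v : V} (hu : u ∈ fiberF par r Vf Ef d) (hv : v ∈ fiberF par r Vf Ef d)
    (hd : dep par r hre u ≤ dep par r hre v) : IsAncestor par u v := by
  have hcu := (fiber_clean par r Vf Ef hu).1
  have hcv := (fiber_clean par r Vf Ef hv).1
  have hau : IsAncestor par u d := (clean_props hcu).1
  have hav : IsAncestor par v d := (clean_props hcv).1
  rcases anc_total hau hav with h | h
  · exact h
  · have hv_ne : v ≠ r := (clean_props hcv).2.2.1.2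
    have heq : v = u := anc_eq_of_dep hroot hre hv_ne h hd
    rw [← heq]; exact anc_refl par v

theorem fiber_anc_top {d v : V} (h : (fiberF par r Vf Ef d).Nonempty)
    (hv : v ∈ fiberF par r Vf Ef d) : IsAncestor par (topF par r Vf Ef hre d) v :=
  fiber_anc par r Vf Ef hre hroot (topF_spec par r Vf Ef hre h).1 hv
    ((topF_spec par r Vf Ef hre h).2 v hv)

theorem fiber_anc_bot {d v : V} (h : (fiberF par r Vf Ef d).Nonempty)
    (hv : v ∈ fiberF par r Vf Ef d) : IsAncestor par v (botF par r Vf Ef hre d) :=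
  fiber_anc par r Vf Ef hre hroot hv (botF_spec par r Vf Ef hre h).1
    ((botF_spec par r Vf Ef hre h).2 v hv)

/-- roots of the final subtrees -/
def TreeRoot (w : V) : Prop :=
  w ≠ r ∧ w ∉ Vf ∧ ¬(Cand par r Vf Ef w).Nonempty ∧
    (par w = r ∨ par w ∈ Vf ∨ w ∈ Ef ∨ (Cand par r Vf Ef (par w)).Nonempty)

/-- key lemma: subtrees below tree roots are entirely clean -/
theorem tree_clean {w v : V} (hw : TreeRoot par r Vf Ef w) (h : IsAncestor par w v) :
    Clean par r Vf Ef w v := by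
  obtain ⟨hwr, hwVf, hwC, _⟩ := hw
  obtain ⟨n, hn⟩ := h
  induction n generalizing v with
  | zero =>
    rw [Function.iterate_zero_apply] at hn
    subst hn; exact clean_refl hwVf hwr
  | succ m ih =>
    have hpv : par^[m] (par v) = w := by rw [← Function.iterate_succ_apply]; exact hn
    have hih : Clean par r Vf Ef w (par v) := ih hpv
    have hvr : v ≠ r := by
      rintro rfl
      exact hwr (by rw [← hn, iter_root hroot])
    have hprops := clean_props hih
    have hvnot : v ∉ Vf ∧ v ∉ Ef := by
      by_contra hc
      have hmem : v ∈ Vf ∪ Ef := by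
        rcases not_and_or.mp hc with h | h
        · exact Finset.mem_union_left _ (not_not.mp h)
        · exact Finset.mem_union_right _ (not_not.mp h)
      have hdd : par v ∈ DD par Vf Ef := Finset.mem_image_of_mem par hmem
      exact hwC ⟨par v, (mem_Cand par r Vf Ef).mpr ⟨hdd, hih⟩⟩
    refine clean_trans hih ⟨1, ?_, ?_, ?_⟩
    · simp
    · intro i hi
      interval_cases i
      · exact ⟨hvnot.1, hvr⟩
      · simpa using ⟨hprops.2.1.1, hprops.2.1.2⟩
    · intro i hi
      interval_cases i
      simpa using hvnot.2

theorem noNest {ρ₁ ρ₂ : V} (h1 : TreeRoot par r Vf Ef ρ₁) (h2 : TreeRoot par r Vf Ef ρ₂)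
    (h : IsAncestor par ρ₁ ρ₂) : ρ₁ = ρ₂ := by
  by_contra hne
  obtain ⟨n, hn⟩ := h
  have hn0 : n ≠ 0 := by rintro rfl; exact hne hn.symm
  have hc1 : Clean par r Vf Ef ρ₁ ρ₂ := tree_clean par r Vf Ef hre hroot h1 ⟨n, hn⟩
  have hancp : IsAncestor par ρ₁ (par ρ₂) := by
    refine ⟨n - 1, ?_⟩
    rw [← Function.iterate_succ_apply, Nat.succ_eq_add_one, Nat.sub_add_cancel (Nat.pos_of_ne_zero hn0)]
    exact hn
  have hc2 : Clean par r Vf Ef ρ₁ (par ρ₂) := tree_clean par r Vf Ef hre hroot h1 hancp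
  have hp := clean_props hc2
  rcases h2.2.2.2 with h | h | h | h
  · exact hp.2.1.2 h
  · exact hp.2.1.1 h
  · exact (clean_props hc1).2.2.2 hne h
  · obtain ⟨d, hd⟩ := h
    rw [mem_Cand] at hd
    exact h1.2.2.1 ⟨d, (mem_Cand par r Vf Ef).mpr ⟨hd.1, clean_trans hc2 hd.2⟩⟩

/-- points on the tree path between topF and botF are exactly the fiber -/
theorem path_mem_fiber {d v : V} (h : (fiberF par r Vf Ef d).Nonempty)
    (h1 : IsAncestor par (topF par r Vf Ef hre d) v)
    (h2 : IsAncestor par v (botF par r Vf Ef hre d)) :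
    v ∈ fiberF par r Vf Ef d ∧ Clean par r Vf Ef (topF par r Vf Ef hre d) v := by
  have htop := (topF_spec par r Vf Ef hre h).1
  have hbot := (botF_spec par r Vf Ef hre h).1
  have hct := (fiber_clean par r Vf Ef htop).1
  have hcb := (fiber_clean par r Vf Ef hbot).1
  have hdd := (fiber_clean par r Vf Ef htop).2
  have hvd : IsAncestor par v d := anc_trans h2 (clean_props hcb).1
  obtain ⟨hc1, hc2⟩ := clean_mid hroot hre hct h1 hvd
  have hdc : d ∈ Cand par r Vf Ef v := (mem_Cand par r Vf Ef).mpr ⟨hdd, hc2⟩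
  have hsig : sig par r Vf Ef v = d := by
    refine sig_contig par r Vf Ef hroot ?_ ?_ hc1 hdc
    · exact ((mem_fiberF par r Vf Ef).mp htop).1
    · exact ((mem_fiberF par r Vf Ef).mp htop).2
  exact ⟨(mem_fiberF par r Vf Ef).mpr ⟨⟨d, hdc⟩, hsig⟩, hc1⟩

/-- coverage -/
theorem cov : ∀ N v, dep par r hre v ≤ N → v ≠ r → v ∉ Vf →
    (∃ d, (fiberF par r Vf Ef d).Nonempty ∧ v ∈ fiberF par r Vf Ef d) ∨
      ∃ ρ, TreeRoot par r Vf Ef ρ ∧ IsAncestor par ρ v := by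
  intro N
  induction N with
  | zero =>
    intro v hv hvr _
    have h0 : dep par r hre v = 0 := Nat.le_zero.mp hv
    have := dep_spec par r hre v
    rw [h0] at this
    exact absurd this hvr
  | succ N ih =>
    intro v hv hvr hvVf
    by_cases hC : (Cand par r Vf Ef v).Nonempty
    · left
      have hmem : v ∈ fiberF par r Vf Ef (sig par r Vf Ef v) :=
        (mem_fiberF par r Vf Ef).mpr ⟨hC, rfl⟩
      exact ⟨sig par r Vf Ef v, ⟨v, hmem⟩, hmem⟩
    by_cases h4 : par v = r ∨ par v ∈ Vf ∨ v ∈ Ef ∨ (Cand par r Vf Ef (par v)).Nonempty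
    · right
      exact ⟨v, ⟨hvr, hvVf, hC, h4⟩, anc_refl par v⟩
    push_neg at h4
    obtain ⟨h4a, h4b, _, h4d⟩ := h4
    have hlt := dep_par_lt hroot hre hvr
    rcases ih (par v) (by omega) h4a h4b with ⟨d, hne, hmem⟩ | ⟨ρ, hρ, m, hm⟩
    · exact absurd ((mem_fiberF par r Vf Ef).mp hmem).1 (Finset.not_nonempty_iff_eq_empty.mpr h4d)
    · right
      exact ⟨ρ, hρ, m + 1, by rw [Function.iterate_succ_apply, hm]⟩

end Main

end DTPaux


/-- Disjoint tree partitioning. `G` has a DFS tree `T` rooted at a dummy root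
`r` adjacent to all other vertices. Given a set `Vf` of failed vertices and a
set `Ef` of failed tree edges (each represented by its child endpoint `c`,
the edge being `(T.par c, c)`), there is a partition of `V \ ({r} ∪ Vf)` into
a collection `P` of ancestor-descendant paths of `T` (given by their endpoint
pairs) and a collection `Ts` of subtrees of `T` (given by their roots) such
that no part contains a failed vertex or failed edge, `|P| ≤ |Vf| + |Ef|`,
and no edge of `G` joins two distinct trees of `Ts`. -/
theorem disjoint_tree_partitioning {V : Type*} [Fintype V] [DecidableEq V]
    (G : SimpleGraph V) (r : V) (hr : ∀ v, v ≠ r → G.Adj r v)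
    (T : RootedSpanningTree G r) (hT : T.noCrossEdges)
    (Vf : Finset V) (hVf : r ∉ Vf)
    (Ef : Finset V) (hEf : ∀ c ∈ Ef, c ≠ r) :
    ∃ (P : Finset (V × V)) (Ts : Finset V),
      -- each element of `P` is an ancestor-descendant path of `T`
      (∀ p ∈ P, IsAncestor T.par p.1 p.2) ∧
      -- the number of paths is at most the number of failures
      P.card ≤ Vf.card + Ef.card ∧
      -- no path contains a failed vertex, a failed edge, or the root
      (∀ p ∈ P, ∀ v, OnTreePath T.par p.1 p.2 v →
        v ≠ r ∧ v ∉ Vf ∧ (v ≠ p.1 → v ∉ Ef)) ∧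
      -- no subtree contains a failed vertex, a failed edge, or the root
      (∀ ρ ∈ Ts, ∀ v, IsAncestor T.par ρ v →
        v ≠ r ∧ v ∉ Vf ∧ (v ≠ ρ → v ∉ Ef)) ∧
      -- no edge of `G` joins two distinct subtrees of the collection
      (∀ ρ₁ ∈ Ts, ∀ ρ₂ ∈ Ts, ρ₁ ≠ ρ₂ →
        ∀ u v, IsAncestor T.par ρ₁ u → IsAncestor T.par ρ₂ v → ¬ G.Adj u v) ∧
      -- the parts cover `V \ ({r} ∪ Vf)`
      (∀ v, v ≠ r → v ∉ Vf →
        (∃ p ∈ P, OnTreePath T.par p.1 p.2 v) ∨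
        (∃ ρ ∈ Ts, IsAncestor T.par ρ v)) ∧
      -- the parts are pairwise vertex-disjoint
      (∀ p₁ ∈ P, ∀ p₂ ∈ P, p₁ ≠ p₂ →
        ∀ v, OnTreePath T.par p₁.1 p₁.2 v → ¬ OnTreePath T.par p₂.1 p₂.2 v) ∧
      (∀ p ∈ P, ∀ ρ ∈ Ts,
        ∀ v, OnTreePath T.par p.1 p.2 v → ¬ IsAncestor T.par ρ v) ∧
      (∀ ρ₁ ∈ Ts, ∀ ρ₂ ∈ Ts, ρ₁ ≠ ρ₂ →
        ∀ v, IsAncestor T.par ρ₁ v → ¬ IsAncestor T.par ρ₂ v) := by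
  classical
  open DTPaux in
  set pr := T.par with hpr
  have hroot : pr r = r := T.par_root
  have hre : ∀ v, ∃ n, pr^[n] v = r := T.reaches_root
  set P : Finset (V × V) :=
    ((DD pr Vf Ef).filter (fun d => (fiberF pr r Vf Ef d).Nonempty)).image
      (fun d => (topF pr r Vf Ef hre d, botF pr r Vf Ef hre d)) with hPdef
  set Ts : Finset V := Finset.univ.filter (TreeRoot pr r Vf Ef) with hTsdef
  have hPmem : ∀ p ∈ P, ∃ d, (fiberF pr r Vf Ef d).Nonempty ∧
      p = (topF pr r Vf Ef hre d, botF pr r Vf Ef hre d) := by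
    intro p hp
    rw [hPdef, Finset.mem_image] at hp
    obtain ⟨d, hd, hpd⟩ := hp
    rw [Finset.mem_filter] at hd
    exact ⟨d, hd.2, hpd.symm⟩
  have hTsmem : ∀ ρ, ρ ∈ Ts ↔ TreeRoot pr r Vf Ef ρ := by
    intro ρ; rw [hTsdef, Finset.mem_filter]; simp
  have honpath : ∀ d, (fiberF pr r Vf Ef d).Nonempty → ∀ v,
      OnTreePath pr (topF pr r Vf Ef hre d) (botF pr r Vf Ef hre d) v →
      v ∈ fiberF pr r Vf Ef d ∧ Clean pr r Vf Ef (topF pr r Vf Ef hre d) v := by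
    intro d hne v hv
    exact path_mem_fiber pr r Vf Ef hre hroot hne hv.1 hv.2
  refine ⟨P, Ts, ?_, ?_, ?_, ?_, ?_, ?_, ?_, ?_, ?_⟩
  · -- (i) paths are ancestor-descendant
    intro p hp
    obtain ⟨d, hne, rfl⟩ := hPmem p hp
    exact fiber_anc_top pr r Vf Ef hre hroot hne (botF_spec pr r Vf Ef hre hne).1
  · -- (ii) cardinality
    calc P.card ≤ ((DD pr Vf Ef).filter (fun d => (fiberF pr r Vf Ef d).Nonempty)).card :=
          Finset.card_image_le
      _ ≤ (DD pr Vf Ef).card := Finset.card_filter_le _ _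
      _ ≤ (Vf ∪ Ef).card := Finset.card_image_le
      _ ≤ Vf.card + Ef.card := Finset.card_union_le _ _
  · -- (iii) paths avoid failures
    intro p hp v hv
    obtain ⟨d, hne, rfl⟩ := hPmem p hp
    obtain ⟨hvf, hcl⟩ := honpath d hne v hv
    have hcv := (fiber_clean pr r Vf Ef hvf).1
    have hp1 := clean_props hcv
    have hp2 := clean_props hcl
    exact ⟨hp1.2.2.1.2, hp1.2.2.1.1, fun hne' => hp2.2.2.2 (Ne.symm hne')⟩
  · -- (iv) subtrees avoid failures
    intro ρ hρ v hv
    have htr := (hTsmem ρ).mp hρ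
    have hc := tree_clean pr r Vf Ef hre hroot htr hv
    have hp := clean_props hc
    exact ⟨hp.2.1.2, hp.2.1.1, fun hne' => hp.2.2.2 (Ne.symm hne')⟩
  · -- (v) no edge between distinct subtrees
    intro ρ₁ hρ₁ ρ₂ hρ₂ hne u v h1 h2 hadj
    have ht1 := (hTsmem ρ₁).mp hρ₁
    have ht2 := (hTsmem ρ₂).mp hρ₂
    rcases hT u v hadj with h | h
    · have hρ₁v : IsAncestor pr ρ₁ v := anc_trans h1 h
      rcases anc_total hρ₁v h2 with hc | hc
      · exact hne (noNest pr r Vf Ef hre hroot ht1 ht2 hc)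
      · exact hne (noNest pr r Vf Ef hre hroot ht2 ht1 hc).symm
    · have hρ₂u : IsAncestor pr ρ₂ u := anc_trans h2 h
      rcases anc_total h1 hρ₂u with hc | hc
      · exact hne (noNest pr r Vf Ef hre hroot ht1 ht2 hc)
      · exact hne (noNest pr r Vf Ef hre hroot ht2 ht1 hc).symm
  · -- (vi) coverage
    intro v hvr hvVf
    rcases cov pr r Vf Ef hre hroot (dep pr r hre v) v le_rfl hvr hvVf with
      ⟨d, hne, hmem⟩ | ⟨ρ, htr, hanc⟩
    · left
      have hdd := (fiber_clean pr r Vf Ef hmem).2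
      refine ⟨(topF pr r Vf Ef hre d, botF pr r Vf Ef hre d), ?_, ?_⟩
      · rw [hPdef, Finset.mem_image]
        exact ⟨d, Finset.mem_filter.mpr ⟨hdd, hne⟩, rfl⟩
      · exact And.intro (fiber_anc_top pr r Vf Ef hre hroot hne hmem)
          (fiber_anc_bot pr r Vf Ef hre hroot hne hmem)
    · right
      exact ⟨ρ, (hTsmem ρ).mpr htr, hanc⟩
  · -- (vii) paths pairwise disjoint
    intro p₁ hp₁ p₂ hp₂ hne v hv₁ hv₂
    obtain ⟨d₁, hne₁, rfl⟩ := hPmem p₁ hp₁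
    obtain ⟨d₂, hne₂, rfl⟩ := hPmem p₂ hp₂
    have hm₁ := (honpath d₁ hne₁ v hv₁).1
    have hm₂ := (honpath d₂ hne₂ v hv₂).1
    rw [mem_fiberF] at hm₁ hm₂
    exact hne (by rw [← hm₁.2, hm₂.2])
  · -- (viii) paths and subtrees disjoint
    intro p hp ρ hρ v hv hanc
    obtain ⟨d, hne, rfl⟩ := hPmem p hp
    have hvf := (honpath d hne v hv).1
    have htr := (hTsmem ρ).mp hρ
    have hcρ := tree_clean pr r Vf Ef hre hroot htr hanc
    obtain ⟨hcv, hdd⟩ := fiber_clean pr r Vf Ef hvf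
    exact htr.2.2.1 ⟨d, (mem_Cand pr r Vf Ef).mpr ⟨hdd, clean_trans hcρ hcv⟩⟩
  · -- (ix) subtrees pairwise disjoint
    intro ρ₁ hρ₁ ρ₂ hρ₂ hne v h1 h2
    have ht1 := (hTsmem ρ₁).mp hρ₁
    have ht2 := (hTsmem ρ₂).mp hρ₂
    rcases anc_total h1 h2 with hc | hc
    · exact hne (noNest pr r Vf Ef hre hroot ht1 ht2 hc)
    · exact hne (noNest pr r Vf Ef hre hroot ht2 ht1 hc).symm
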